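/- Let n ≥ 3 be an integer, ξ ∈ ℝ, and η ∈ ℝ^{n-1}. Let a ∈ ℂ, u ∈ ℂ^{n-1}, w ∈ ℂ^{n-1}, and let A be a complex (n−1)×(n−1) matrix. Assume: (i) a + trace(A) = 0; (ii) (ξ − i)·a + ⟨η, u⟩ = 0 and (ξ − i)·w + A·η = 0; (iii) for every Y ∈ ℝ^{n-1} with |Y| = 1, writing c = ⟨Y, η⟩/(ξ² + 1), one has −(ξ − i)·c·a + ⟨Y, u⟩ − (ξ − i)²·c²·⟨Y, w⟩ + (ξ − i)·c·⟨Y, A·Y⟩ = 0; (iv) for every Y ∈ ℝ^{n-1} with |Y| = 1 and ⟨Y, η⟩ = 0, one has A·Y − ⟨Y, A·Y⟩·Y = 0. Then a = 0, u = 0, w = 0, and A = 0. -/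

import Mathlib

open scoped RealInnerProductSpace
open Complex

/-- The pairing `⟨Y, v⟩ = ∑ j, Y j * v j` of a real vector `Y` with a complex vector `v`. -/
noncomputable def cpair {m : ℕ} (Y : EuclideanSpace ℝ (Fin m))
    (v : EuclideanSpace ℂ (Fin m)) : ℂ :=
  ∑ j, (Y j : ℂ) * v j

/-- Action of a complex matrix on a real Euclidean vector. -/
noncomputable def mulEC {m : ℕ} (A : Matrix (Fin m) (Fin m) ℂ)
    (Y : EuclideanSpace ℝ (Fin m)) : EuclideanSpace ℂ (Fin m) :=
  WithLp.toLp 2 (fun i => ∑ j, A i j * (Y j : ℂ))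

/-- The quadratic form `⟨Y, A·Y⟩ = ∑ i j, Y i * A i j * Y j`. -/
noncomputable def cquad {m : ℕ} (A : Matrix (Fin m) (Fin m) ℂ)
    (Y : EuclideanSpace ℝ (Fin m)) : ℂ :=
  ∑ i, ∑ j, (Y i : ℂ) * A i j * (Y j : ℂ)

/-- A real vector regarded as a complex vector. -/
noncomputable def toC {m : ℕ} (Y : EuclideanSpace ℝ (Fin m)) :
    EuclideanSpace ℂ (Fin m) :=
  WithLp.toLp 2 (fun j => (Y j : ℂ))

namespace Stmt5Aux

variable {m : ℕ} (A : Matrix (Fin m) (Fin m) ℂ)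

noncomputable def bq (X Y : EuclideanSpace ℝ (Fin m)) : ℂ :=
  ∑ i, ∑ j, (X i : ℂ) * A i j * (Y j : ℂ)

lemma cquad_eq_bq (X : EuclideanSpace ℝ (Fin m)) : cquad A X = bq A X X := rfl

lemma cpair_mulEC (X Y : EuclideanSpace ℝ (Fin m)) :
    cpair X (mulEC A Y) = bq A X Y := by
  unfold cpair mulEC bq
  simp only [Finset.mul_sum, PiLp.toLp_apply]
  exact Finset.sum_congr rfl fun i _ => Finset.sum_congr rfl fun j _ => by ring

lemma cpair_comb (α s : ℝ) (Z W : EuclideanSpace ℝ (Fin m)) (v : EuclideanSpace ℂ (Fin m)) :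
    cpair (α • Z + s • W) v = α * cpair Z v + s * cpair W v := by
  unfold cpair
  rw [Finset.mul_sum, Finset.mul_sum, ← Finset.sum_add_distrib]
  refine Finset.sum_congr rfl fun j _ => ?_
  simp only [PiLp.add_apply, PiLp.smul_apply, smul_eq_mul]
  push_cast
  ring

lemma cpair_smul_left (c : ℝ) (Z : EuclideanSpace ℝ (Fin m)) (v : EuclideanSpace ℂ (Fin m)) :
    cpair (c • Z) v = c * cpair Z v := by
  unfold cpair
  rw [Finset.mul_sum]
  refine Finset.sum_congr rfl fun j _ => ?_
  simp only [PiLp.smul_apply, smul_eq_mul]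
  push_cast; ring

lemma cpair_add_right (X : EuclideanSpace ℝ (Fin m)) (v v' : EuclideanSpace ℂ (Fin m)) :
    cpair X (v + v') = cpair X v + cpair X v' := by
  unfold cpair
  rw [← Finset.sum_add_distrib]
  refine Finset.sum_congr rfl fun j _ => ?_
  simp only [PiLp.add_apply]; ring

lemma cpair_smul_right (c : ℂ) (X : EuclideanSpace ℝ (Fin m)) (v : EuclideanSpace ℂ (Fin m)) :
    cpair X (c • v) = c * cpair X v := by
  unfold cpair
  rw [Finset.mul_sum]
  refine Finset.sum_congr rfl fun j _ => ?_
  simp only [PiLp.smul_apply, smul_eq_mul]; ring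

lemma cpair_toC (X Y : EuclideanSpace ℝ (Fin m)) :
    cpair X (toC Y) = ((⟪X, Y⟫ : ℝ) : ℂ) := by
  unfold cpair toC
  simp only [PiLp.toLp_apply, PiLp.inner_apply, RCLike.inner_apply, conj_trivial]
  push_cast
  exact Finset.sum_congr rfl fun _ _ => mul_comm _ _

lemma cpair_single (i : Fin m) (v : EuclideanSpace ℂ (Fin m)) :
    cpair (EuclideanSpace.single i (1:ℝ)) v = v i := by
  unfold cpair
  rw [Finset.sum_eq_single i]
  · simp
  · intro b _ hb; simp [EuclideanSpace.single_apply, hb]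
  · simp

lemma mulEC_comb (α s : ℝ) (Z W : EuclideanSpace ℝ (Fin m)) :
    mulEC A (α • Z + s • W) = (α : ℂ) • mulEC A Z + (s : ℂ) • mulEC A W := by
  ext i
  simp only [mulEC, PiLp.toLp_apply, PiLp.add_apply, PiLp.smul_apply, smul_eq_mul]
  rw [Finset.mul_sum, Finset.mul_sum, ← Finset.sum_add_distrib]
  refine Finset.sum_congr rfl fun j _ => ?_
  push_cast; ring

lemma mulEC_smul (c : ℝ) (Z : EuclideanSpace ℝ (Fin m)) :
    mulEC A (c • Z) = (c : ℂ) • mulEC A Z := by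
  ext i
  simp only [mulEC, PiLp.toLp_apply, PiLp.smul_apply, smul_eq_mul]
  rw [Finset.mul_sum]
  refine Finset.sum_congr rfl fun j _ => ?_
  push_cast; ring

lemma mulEC_single_apply (i j : Fin m) :
    mulEC A (EuclideanSpace.single j (1:ℝ)) i = A i j := by
  unfold mulEC
  rw [PiLp.toLp_apply]
  rw [Finset.sum_eq_single j]
  · simp
  · intro b _ hb; simp [EuclideanSpace.single_apply, hb]
  · simp

lemma toC_smul (c : ℝ) (Z : EuclideanSpace ℝ (Fin m)) :
    toC (c • Z) = (c : ℂ) • toC Z := by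
  ext i
  simp only [toC, PiLp.toLp_apply, PiLp.smul_apply, smul_eq_mul]
  push_cast; rfl

lemma cquad_comb (α s : ℝ) (Z W : EuclideanSpace ℝ (Fin m)) :
    cquad A (α • Z + s • W)
      = α^2 * bq A Z Z + (α*s) * (bq A Z W + bq A W Z) + s^2 * bq A W W := by
  unfold cquad bq
  simp only [Finset.mul_sum, ← Finset.sum_add_distrib]
  refine Finset.sum_congr rfl fun i _ => ?_
  refine Finset.sum_congr rfl fun j _ => ?_
  simp only [PiLp.add_apply, PiLp.smul_apply, smul_eq_mul]
  push_cast; ring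

lemma norm_comb (Z W : EuclideanSpace ℝ (Fin m)) (hZ : ‖Z‖ = 1) (hW : ‖W‖ = 1)
    (ho : ⟪Z, W⟫ = 0) (α s : ℝ) (h : α^2 + s^2 = 1) : ‖α • Z + s • W‖ = 1 := by
  have h2 : ‖α • Z + s • W‖^2 = 1 := by
    rw [← real_inner_self_eq_norm_sq]
    simp only [inner_add_add_self, real_inner_smul_left, real_inner_smul_right]
    rw [real_inner_self_eq_norm_sq, real_inner_self_eq_norm_sq, hZ, hW]
    have ho' : ⟪W, Z⟫ = (0:ℝ) := by rw [real_inner_comm]; exact ho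
    rw [ho', ho]
    ring_nf
    linarith [h]
  have h3 : (‖α • Z + s • W‖ - 1) * (‖α • Z + s • W‖ + 1) = 0 := by linear_combination h2
  rcases mul_eq_zero.mp h3 with h4 | h4
  · linarith
  · have := norm_nonneg (α • Z + s • W); linarith

end Stmt5Aux

namespace Stmt5Aux

variable {m : ℕ} (A : Matrix (Fin m) (Fin m) ℂ)

lemma bq_single (i j : Fin m) :
    bq A (EuclideanSpace.single i (1:ℝ)) (EuclideanSpace.single j (1:ℝ)) = A i j := by
  rw [← cpair_mulEC, cpair_single, mulEC_single_apply]

lemma cpair_zero_left (v : EuclideanSpace ℂ (Fin m)) : cpair 0 v = 0 := by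
  simp [cpair]

lemma mulEC_zero : mulEC A 0 = 0 := by
  ext i; simp [mulEC, PiLp.toLp_apply]

lemma cquad_single (i : Fin m) : cquad A (EuclideanSpace.single i (1:ℝ)) = A i i := by
  rw [cquad_eq_bq, bq_single]

lemma toC_zero : toC (0 : EuclideanSpace ℝ (Fin m)) = 0 := by
  ext i; simp [toC, PiLp.toLp_apply]

end Stmt5Aux

open Stmt5Aux

theorem stmt_5 (n : ℕ) (hn : 3 ≤ n)
    (ξ : ℝ) (η : EuclideanSpace ℝ (Fin (n - 1)))
    (a : ℂ) (u w : EuclideanSpace ℂ (Fin (n - 1)))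
    (A : Matrix (Fin (n - 1)) (Fin (n - 1)) ℂ)
    (htrace : a + A.trace = 0)
    (hgauge1 : ((ξ : ℂ) - I) * a + cpair η u = 0)
    (hgauge2 : (((ξ : ℂ) - I)) • w + mulEC A η = 0)
    (h3 : ∀ Y : EuclideanSpace ℝ (Fin (n - 1)), ‖Y‖ = 1 →
      -(((ξ : ℂ) - I) * ((⟪Y, η⟫ / (ξ ^ 2 + 1) : ℝ) : ℂ)) * a + cpair Y u
        - ((ξ : ℂ) - I) ^ 2 * ((⟪Y, η⟫ / (ξ ^ 2 + 1) : ℝ) : ℂ) ^ 2 * cpair Y w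
        + ((ξ : ℂ) - I) * ((⟪Y, η⟫ / (ξ ^ 2 + 1) : ℝ) : ℂ) * cquad A Y = 0)
    (h4 : ∀ Y : EuclideanSpace ℝ (Fin (n - 1)), ‖Y‖ = 1 → ⟪Y, η⟫ = 0 →
      mulEC A Y - cquad A Y • toC Y = 0) :
    a = 0 ∧ u = 0 ∧ w = 0 ∧ A = 0 := by
  have hm2 : 2 ≤ n - 1 := by omega
  set β : ℂ := (ξ:ℂ) - I with hβdef
  have hβ : β ≠ 0 := by
    intro h
    have := congrArg Complex.im h
    simp [hβdef] at this
  have hSR : (ξ^2 + 1 : ℝ) ≠ 0 := by positivity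
  have hS : ((ξ:ℂ)^2 + 1) ≠ 0 := by
    have h2 : ((ξ^2+1:ℝ):ℂ) ≠ 0 := by exact_mod_cast hSR
    push_cast at h2; exact h2
  have hsingle_norm : ∀ i : Fin (n-1), ‖EuclideanSpace.single i (1:ℝ)‖ = 1 := by
    intro i; rw [EuclideanSpace.norm_single]; norm_num
  by_cases hη : η = 0
  · -- degenerate case
    subst hη
    have ha : a = 0 := by
      rw [cpair_zero_left, add_zero] at hgauge1
      exact (mul_eq_zero.mp hgauge1).resolve_left hβ
    have hu : u = 0 := by
      ext i
      have h := h3 (EuclideanSpace.single i (1:ℝ)) (hsingle_norm i)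
      rw [inner_zero_right] at h
      simp only [zero_div, Complex.ofReal_zero, mul_zero, neg_zero, zero_mul, zero_pow,
        zero_add, sub_zero, add_zero, ne_eq, OfNat.ofNat_ne_zero, not_false_eq_true] at h
      rw [cpair_single] at h
      simpa using h
    have hAdiag : ∀ i j : Fin (n-1), A i j = if i = j then A i i else 0 := by
      intro i j
      have h := h4 (EuclideanSpace.single j (1:ℝ)) (hsingle_norm j) (inner_zero_right _)
      rw [sub_eq_zero] at h
      have h2 := PiLp.ext_iff.mp h i
      rw [mulEC_single_apply, cquad_single] at h2
      simp only [PiLp.smul_apply, smul_eq_mul, toC, PiLp.toLp_apply] at h2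
      rw [EuclideanSpace.single_apply] at h2
      by_cases hij : i = j
      · subst hij; simp
      · simp only [hij, if_false]
        rw [h2]
        simp [hij]
    have hAeq : ∀ i j : Fin (n-1), A i i = A j j := by
      intro i j
      by_cases hij : i = j
      · rw [hij]
      · set Y : EuclideanSpace ℝ (Fin (n-1)) :=
          (3/5:ℝ) • EuclideanSpace.single i (1:ℝ) + (4/5:ℝ) • EuclideanSpace.single j (1:ℝ) with hY
        have hYn : ‖Y‖ = 1 := by
          apply norm_comb _ _ (hsingle_norm i) (hsingle_norm j) _ _ _ (by norm_num)
          rw [EuclideanSpace.inner_single_left]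
          simp [EuclideanSpace.single_apply, hij]
        have h := h4 Y hYn (inner_zero_right _)
        rw [sub_eq_zero] at h
        have h2 := PiLp.ext_iff.mp h i
        rw [hY, mulEC_comb, cquad_comb] at h2
        simp only [PiLp.add_apply, PiLp.smul_apply, smul_eq_mul, toC, PiLp.toLp_apply] at h2
        rw [mulEC_single_apply, mulEC_single_apply, bq_single, bq_single, bq_single, bq_single,
          EuclideanSpace.single_apply, EuclideanSpace.single_apply] at h2
        have hji : ¬ (j = i) := fun h' => hij h'.symm
        rw [hAdiag i j, hAdiag j i] at h2
        simp only [hij, hji, if_false, if_true, if_pos rfl] at h2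
        push_cast at h2
        linear_combination (125/48 : ℂ) * h2
    obtain ⟨i0⟩ : Nonempty (Fin (n-1)) := ⟨⟨0, by omega⟩⟩
    have htrA : A.trace = (↑(n-1) : ℂ) * A i0 i0 := by
      rw [Matrix.trace]
      simp only [Matrix.diag]
      rw [Finset.sum_congr rfl (fun i _ => hAeq i i0)]
      simp [Finset.sum_const, Finset.card_univ, nsmul_eq_mul]
    have hA00 : A i0 i0 = 0 := by
      rw [ha, zero_add, htrA] at htrace
      have hcard : ((n-1 : ℕ) : ℂ) ≠ 0 := by
        simp only [ne_eq, Nat.cast_eq_zero]; omega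
      exact (mul_eq_zero.mp htrace).resolve_left hcard
    have hA : A = 0 := by
      ext i j
      rw [hAdiag i j]
      by_cases hij : i = j
      · simp [hij, hAeq j i0, hA00]
      · simp [hij]
    have hw : w = 0 := by
      rw [hA] at hgauge2
      have : mulEC (0 : Matrix (Fin (n-1)) (Fin (n-1)) ℂ) 0 = 0 := by
        ext i; simp [mulEC, PiLp.toLp_apply]
      rw [this, add_zero, smul_eq_zero] at hgauge2
      exact hgauge2.resolve_left hβ
    exact ⟨ha, hu, hw, hA⟩
  · -- η ≠ 0
    set r : ℝ := ‖η‖ with hrdef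
    have hr : 0 < r := norm_pos_iff.mpr hη
    have hrne : r ≠ 0 := ne_of_gt hr
    have hrC : (r:ℂ) ≠ 0 := by exact_mod_cast hrne
    set e : EuclideanSpace ℝ (Fin (n-1)) := r⁻¹ • η with hedef
    have hen : ‖e‖ = 1 := norm_smul_inv_norm hη
    have hηe : η = r • e := by rw [hedef, smul_smul, mul_inv_cancel₀ hrne, one_smul]
    have heη : ⟪e, η⟫ = r := by
      rw [hedef, real_inner_smul_left, real_inner_self_eq_norm_sq, ← hrdef]
      field_simp
    have hηi : ∀ i, η i = r * e i := by
      intro i; rw [hηe]; rfl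
    have hT : ((ξ:ℂ)^2 + 1) * ((ξ:ℂ)^2 + 1)⁻¹ = 1 := mul_inv_cancel₀ hS
    have hTne : ((ξ:ℂ)^2 + 1)⁻¹ ≠ 0 := inv_ne_zero hS
    have hSr2 : ((ξ:ℂ)^2 + 1) + (r:ℂ)^2 ≠ 0 := by
      have h0 : (ξ^2 + 1 + r^2 : ℝ) ≠ 0 := by positivity
      have h2 : ((ξ^2+1+r^2:ℝ):ℂ) ≠ 0 := by exact_mod_cast h0
      push_cast at h2
      exact h2
    -- Step A : cpair Z u = 0 for Z ⟂ η
    have hZu : ∀ Z : EuclideanSpace ℝ (Fin (n-1)), ⟪Z, η⟫ = 0 → cpair Z u = 0 := by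
      intro Z hZη
      by_cases hZ0 : Z = 0
      · rw [hZ0, cpair_zero_left]
      · have hZn : ‖(‖Z‖⁻¹ • Z)‖ = 1 := norm_smul_inv_norm hZ0
        have h := h3 _ hZn
        rw [real_inner_smul_left, hZη, mul_zero] at h
        simp only [zero_div, Complex.ofReal_zero, mul_zero, neg_zero, zero_mul, ne_eq,
          OfNat.ofNat_ne_zero, not_false_eq_true, zero_pow, zero_add, sub_zero, add_zero] at h
        rw [cpair_smul_left] at h
        rcases mul_eq_zero.mp h with h' | h'
        · exact absurd h' (by exact_mod_cast inv_ne_zero (norm_ne_zero_iff.mpr hZ0))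
        · exact h'
    -- gauge conditions in scalar form
    have hG1 : β * a + (r:ℂ) * cpair e u = 0 := by
      rw [hηe, cpair_smul_left] at hgauge1; exact hgauge1
    have hG2 : ∀ X : EuclideanSpace ℝ (Fin (n-1)),
        β * cpair X w + (r:ℂ) * bq A X e = 0 := by
      intro X
      have h := congrArg (cpair X) hgauge2
      rw [cpair_add_right, cpair_smul_right] at h
      rw [hηe, mulEC_smul, cpair_smul_right, cpair_mulEC] at h
      simpa [cpair] using h
    -- first symbol equation at Y = e
    have Eq1 := h3 e hen
    rw [heη, cquad_eq_bq] at Eq1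
    push_cast at Eq1
    have hA1p : β*(r:ℂ)^2*((ξ:ℂ)^2+1)⁻¹*a + β*a - β*(r:ℂ)^4*(((ξ:ℂ)^2+1)⁻¹)^2*(bq A e e)
        - β*(r:ℂ)^2*((ξ:ℂ)^2+1)⁻¹*(bq A e e) = 0 := by
      linear_combination (-(r:ℂ))*Eq1 + hG1 - β*(r:ℂ)^3*(((ξ:ℂ)^2+1)⁻¹)^2*(hG2 e)
    -- the key per-Z facts
    have key : ∀ Z : EuclideanSpace ℝ (Fin (n-1)), ⟪Z, η⟫ = 0 → ‖Z‖ = 1 →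
        bq A Z e = 0 ∧ bq A Z Z * ((ξ:ℂ)^2+1) = (((ξ:ℂ)^2+1) + (r:ℂ)^2) * bq A e e := by
      intro Z hZη hZn
      have hZe : ⟪Z, e⟫ = 0 := by rw [hedef, real_inner_smul_right, hZη, mul_zero]
      have hp2 : bq A e Z = 0 := by
        have h := h4 Z hZn hZη
        rw [sub_eq_zero] at h
        rw [← cpair_mulEC, h, cpair_smul_right, cpair_toC]
        have heZ : ⟪e, Z⟫ = 0 := by rw [real_inner_comm]; exact hZe
        rw [heZ]
        simp
      have hY2n : ‖(4/5:ℝ) • Z + (3/5:ℝ) • e‖ = 1 := norm_comb Z e hZn hen hZe _ _ (by norm_num)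
      have hY3n : ‖(-(4/5):ℝ) • Z + (3/5:ℝ) • e‖ = 1 := norm_comb Z e hZn hen hZe _ _ (by norm_num)
      have hY2η : ⟪(4/5:ℝ) • Z + (3/5:ℝ) • e, η⟫ = 3/5*r := by
        rw [inner_add_left, real_inner_smul_left, real_inner_smul_left, hZη, heη]; ring
      have hY3η : ⟪(-(4/5):ℝ) • Z + (3/5:ℝ) • e, η⟫ = 3/5*r := by
        rw [inner_add_left, real_inner_smul_left, real_inner_smul_left, hZη, heη]; ring
      have Eq2 := h3 _ hY2n
      rw [hY2η, cpair_comb, cpair_comb, cquad_comb, hZu Z hZη] at Eq2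
      push_cast at Eq2
      have Eq3 := h3 _ hY3n
      rw [hY3η, cpair_comb, cpair_comb, cquad_comb, hZu Z hZη] at Eq3
      push_cast at Eq3
      have hp1C : bq A Z e * (β * (r:ℂ) * (((ξ:ℂ)^2+1)⁻¹)^3 * (((ξ:ℂ)^2+1) + (r:ℂ)^2)) = 0 := by
        linear_combination (125/72)*((ξ:ℂ)^2+1)⁻¹*Eq2 - (125/72)*((ξ:ℂ)^2+1)⁻¹*Eq3
          + β*(r:ℂ)^2*(((ξ:ℂ)^2+1)⁻¹)^3*(hG2 Z) - β*(r:ℂ)*(((ξ:ℂ)^2+1)⁻¹)^2*hp2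
          + β*(r:ℂ)*(((ξ:ℂ)^2+1)⁻¹)^2*(bq A Z e)*hT
      have hCne : (β * (r:ℂ) * (((ξ:ℂ)^2+1)⁻¹)^3 * (((ξ:ℂ)^2+1) + (r:ℂ)^2)) ≠ 0 :=
        mul_ne_zero (mul_ne_zero (mul_ne_zero hβ hrC) (pow_ne_zero 3 hTne)) hSr2
      have hp1 : bq A Z e = 0 := (mul_eq_zero.mp hp1C).resolve_right hCne
      refine ⟨hp1, ?_⟩
      have hA2p : β*(r:ℂ)^2*((ξ:ℂ)^2+1)⁻¹*a + β*a - (9/25)*β*(r:ℂ)^4*(((ξ:ℂ)^2+1)⁻¹)^2*(bq A e e)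
          - (16/25)*β*(r:ℂ)^2*((ξ:ℂ)^2+1)⁻¹*(bq A Z Z)
          - (9/25)*β*(r:ℂ)^2*((ξ:ℂ)^2+1)⁻¹*(bq A e e) = 0 := by
        linear_combination (-5/6*(r:ℂ))*Eq2 + (-5/6*(r:ℂ))*Eq3 + hG1
          - (9/25)*β*(r:ℂ)^3*(((ξ:ℂ)^2+1)⁻¹)^2*(hG2 e)
      have hqZC : (bq A Z Z * ((ξ:ℂ)^2+1) - (((ξ:ℂ)^2+1) + (r:ℂ)^2) * bq A e e)
          * ((16/25)*β*(r:ℂ)^2*((ξ:ℂ)^2+1)⁻¹) = 0 := by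
        linear_combination ((ξ:ℂ)^2+1)*hA1p - ((ξ:ℂ)^2+1)*hA2p
          + (16/25)*β*(r:ℂ)^4*((ξ:ℂ)^2+1)⁻¹*(bq A e e)*hT
      have hCne2 : ((16/25:ℂ)*β*(r:ℂ)^2*((ξ:ℂ)^2+1)⁻¹) ≠ 0 :=
        mul_ne_zero (mul_ne_zero (mul_ne_zero (by norm_num) hβ) (pow_ne_zero 2 hrC)) hTne
      exact sub_eq_zero.mp ((mul_eq_zero.mp hqZC).resolve_right hCne2)
    -- global scalar consequence : a * S = r^2 * q
    have hTaC : (a*((ξ:ℂ)^2+1) - (r:ℂ)^2*(bq A e e)) * (β*(((ξ:ℂ)^2+1) + (r:ℂ)^2)) = 0 := by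
      linear_combination ((ξ:ℂ)^2+1)^2*hA1p
        + (-(β*(r:ℂ)^2*((ξ:ℂ)^2+1)*a) + β*(r:ℂ)^4*(bq A e e)
           + β*(r:ℂ)^4*(bq A e e)*((ξ:ℂ)^2+1)⁻¹*((ξ:ℂ)^2+1) + β*(r:ℂ)^2*((ξ:ℂ)^2+1)*(bq A e e))*hT
    have hTa : a*((ξ:ℂ)^2+1) = (r:ℂ)^2*(bq A e e) :=
      sub_eq_zero.mp ((mul_eq_zero.mp hTaC).resolve_right (mul_ne_zero hβ hSr2))
    -- the common eigenvalue on the orthocomplement of η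
    set lam : ℂ := (((ξ:ℂ)^2+1) + (r:ℂ)^2) * bq A e e * ((ξ:ℂ)^2+1)⁻¹ with hlamdef
    have hlamS : lam * ((ξ:ℂ)^2+1) = (((ξ:ℂ)^2+1) + (r:ℂ)^2) * bq A e e := by
      rw [hlamdef]
      linear_combination ((((ξ:ℂ)^2+1) + (r:ℂ)^2) * bq A e e)*hT
    -- A acts as lam on the orthocomplement of η
    have hAZvec : ∀ Z : EuclideanSpace ℝ (Fin (n-1)), ⟪Z, η⟫ = 0 →
        mulEC A Z = lam • toC Z := by
      intro Z hZη
      by_cases hZ0 : Z = 0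
      · rw [hZ0, mulEC_zero, toC_zero, smul_zero]
      · have hZn : ‖(‖Z‖⁻¹ • Z)‖ = 1 := norm_smul_inv_norm hZ0
        have hZηs : ⟪(‖Z‖⁻¹ • Z), η⟫ = 0 := by rw [real_inner_smul_left, hZη, mul_zero]
        have hq1 : cquad A (‖Z‖⁻¹ • Z) = lam := by
          rw [cquad_eq_bq]
          apply mul_right_cancel₀ hS
          rw [(key _ hZηs hZn).2, hlamS]
        have h := h4 _ hZn hZηs
        rw [sub_eq_zero, hq1] at h
        have hZZ : Z = ‖Z‖ • (‖Z‖⁻¹ • Z) := (smul_inv_smul₀ (norm_ne_zero_iff.mpr hZ0) Z).symm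
        calc mulEC A Z = mulEC A (‖Z‖ • (‖Z‖⁻¹ • Z)) := by rw [← hZZ]
          _ = (‖Z‖:ℂ) • mulEC A (‖Z‖⁻¹ • Z) := mulEC_smul A _ _
          _ = (‖Z‖:ℂ) • (lam • toC (‖Z‖⁻¹ • Z)) := by rw [h]
          _ = lam • ((‖Z‖:ℂ) • toC (‖Z‖⁻¹ • Z)) := smul_comm _ _ _
          _ = lam • toC Z := by rw [← toC_smul, ← hZZ]
    -- bq A Z e = 0 on the whole orthocomplement
    have hp1all : ∀ Z : EuclideanSpace ℝ (Fin (n-1)), ⟪Z, η⟫ = 0 → bq A Z e = 0 := by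
      intro Z hZη
      by_cases hZ0 : Z = 0
      · rw [hZ0, ← cpair_mulEC, cpair_zero_left]
      · have hZn : ‖(‖Z‖⁻¹ • Z)‖ = 1 := norm_smul_inv_norm hZ0
        have hZηs : ⟪(‖Z‖⁻¹ • Z), η⟫ = 0 := by rw [real_inner_smul_left, hZη, mul_zero]
        have h := (key _ hZηs hZn).1
        have hZZ : Z = ‖Z‖ • (‖Z‖⁻¹ • Z) := (smul_inv_smul₀ (norm_ne_zero_iff.mpr hZ0) Z).symm
        rw [hZZ, ← cpair_mulEC, cpair_smul_left, cpair_mulEC, h, mul_zero]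
    -- decomposition of basis vectors
    have hZperp : ∀ j, ⟪EuclideanSpace.single j (1:ℝ) - (e j) • e, η⟫ = 0 := by
      intro j
      rw [inner_sub_left, real_inner_smul_left, EuclideanSpace.inner_single_left, heη, hηi j]
      simp
      ring
    have hdec : ∀ j, EuclideanSpace.single j (1:ℝ)
        = (e j) • e + (1:ℝ) • (EuclideanSpace.single j (1:ℝ) - (e j) • e) := by
      intro j; rw [one_smul]; abel
    -- action of A on e
    have hAei : ∀ i, (mulEC A e) i = bq A e e * (e i:ℂ) := by
      intro i
      rw [← cpair_single i (mulEC A e), cpair_mulEC]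
      conv_lhs => rw [← cpair_mulEC, hdec i, cpair_comb, cpair_mulEC, cpair_mulEC]
      rw [hp1all _ (hZperp i)]
      push_cast
      ring
    -- matrix entries
    have hAij : ∀ i j, A i j = bq A e e * (e i:ℂ) * (e j:ℂ)
        + lam * ((if i = j then (1:ℂ) else 0) - (e i:ℂ) * (e j:ℂ)) := by
      intro i j
      rw [← mulEC_single_apply A i j]
      conv_lhs => rw [hdec j, mulEC_comb, hAZvec _ (hZperp j)]
      simp only [PiLp.add_apply, PiLp.smul_apply, smul_eq_mul]
      rw [hAei i]
      simp only [toC, PiLp.toLp_apply, PiLp.sub_apply, PiLp.smul_apply, smul_eq_mul, EuclideanSpace.single_apply]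
      push_cast [apply_ite (fun x : ℝ => (x:ℂ))]
      ring
    -- the trace identity
    have hsumR : ∑ i, (e i) * (e i) = (1:ℝ) := by
      have h1 : ⟪e, e⟫ = (1:ℝ) := by rw [real_inner_self_eq_norm_sq, hen]; norm_num
      rw [PiLp.inner_apply] at h1
      simp [RCLike.inner_apply] at h1
      rw [← h1]; exact Finset.sum_congr rfl fun _ _ => (sq _).symm
    have hsum : ∑ i, ((e i:ℝ):ℂ) * ((e i:ℝ):ℂ) = 1 := by
      have h := congrArg (fun x : ℝ => (x:ℂ)) hsumR
      push_cast at h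
      simpa using h
    have htrA : A.trace = bq A e e + lam * (((n-1:ℕ):ℂ) - 1) := by
      have hdiag : ∀ i : Fin (n-1), A i i
          = bq A e e * (e i:ℂ) * (e i:ℂ) + lam * (1 - (e i:ℂ) * (e i:ℂ)) := by
        intro i; rw [hAij i i]; simp
      rw [Matrix.trace]
      simp only [Matrix.diag]
      rw [Finset.sum_congr rfl (fun i _ => hdiag i)]
      have h1 : ∑ i : Fin (n-1), ((1:ℂ) - (e i:ℂ)*(e i:ℂ)) = ((n-1:ℕ):ℂ) - 1 := by
        rw [Finset.sum_sub_distrib, hsum, Finset.sum_const, Finset.card_univ, Fintype.card_fin]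
        simp
      rw [Finset.sum_add_distrib]
      congr 1
      · calc ∑ i, bq A e e * (e i:ℂ) * (e i:ℂ)
            = bq A e e * ∑ i, (e i:ℂ)*(e i:ℂ) := by
              rw [Finset.mul_sum]; exact Finset.sum_congr rfl fun i _ => by ring
          _ = bq A e e := by rw [hsum, mul_one]
      · calc ∑ i, lam * ((1:ℂ) - (e i:ℂ)*(e i:ℂ))
            = lam * ∑ i, ((1:ℂ) - (e i:ℂ)*(e i:ℂ)) := by rw [Finset.mul_sum]
          _ = lam * (((n-1:ℕ):ℂ) - 1) := by rw [h1]
    -- q = 0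
    have hmC : ((n-1:ℕ):ℂ) ≠ 0 := by
      simp only [ne_eq, Nat.cast_eq_zero]; omega
    have hq : bq A e e = 0 := by
      have H : a + (bq A e e + lam * (((n-1:ℕ):ℂ) - 1)) = 0 := by rw [← htrA]; exact htrace
      have hqm : bq A e e * (((n-1:ℕ):ℂ) * (((ξ:ℂ)^2+1) + (r:ℂ)^2)) = 0 := by
        linear_combination ((ξ:ℂ)^2+1)*H - hTa - (((n-1:ℕ):ℂ)-1)*hlamS
      exact (mul_eq_zero.mp hqm).resolve_right (mul_ne_zero hmC hSr2)
    have ha : a = 0 := by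
      rw [hq, mul_zero] at hTa
      exact (mul_eq_zero.mp hTa).resolve_right hS
    have hlam0 : lam = 0 := by
      have := hlamS
      rw [hq, mul_zero] at this
      exact (mul_eq_zero.mp this).resolve_right hS
    have hA : A = 0 := by
      ext i j
      rw [hAij i j, hq, hlam0]
      simp
    have hu : u = 0 := by
      have hUη : cpair e u = 0 := by
        have h := hG1
        rw [ha, mul_zero, zero_add] at h
        exact (mul_eq_zero.mp h).resolve_left hrC
      ext i
      have h : cpair (EuclideanSpace.single i (1:ℝ)) u = 0 := by
        rw [hdec i, cpair_comb, hUη, hZu _ (hZperp i)]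
        ring
      rw [cpair_single] at h
      simpa using h
    have hw : w = 0 := by
      rw [hA] at hgauge2
      have hmz : mulEC (0 : Matrix (Fin (n-1)) (Fin (n-1)) ℂ) η = 0 := by
        ext i; simp [mulEC, PiLp.toLp_apply]
      rw [hmz, add_zero, smul_eq_zero] at hgauge2
      exact hgauge2.resolve_left hβ
    exact ⟨ha, hu, hw, hA⟩
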